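/- For d ≥ 3 and ε > 0, λ^d({x ∈ B̄₁(0) : |x₁| > ε}) / λ^d(B̄₁(0)) ≤ (2/(ε√(d-1)))·exp(-ε²(d-1)/2). -/

import Mathlib

open MeasureTheory Metric Set Filter

noncomputable def sliceEquiv (m : ℕ) :
    EuclideanSpace ℝ (Fin (m+1)) ≃ᵐ ℝ × EuclideanSpace ℝ (Fin m) :=
  ((MeasurableEquiv.toLp 2 (Fin (m+1) → ℝ)).symm).trans
    ((MeasurableEquiv.piFinSuccAbove (fun _ => ℝ) 0).trans
      ((MeasurableEquiv.refl ℝ).prodCongr ((MeasurableEquiv.toLp 2 (Fin m → ℝ)).symm).symm))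

lemma sliceEquiv_mp (m : ℕ) :
    MeasurePreserving (sliceEquiv m) volume volume := by
  have h3 : MeasurePreserving
      (Prod.map (id : ℝ → ℝ) (⇑((MeasurableEquiv.toLp 2 (Fin m → ℝ)).symm).symm))
      (volume.prod volume) (volume.prod volume) :=
    (MeasurePreserving.id _).prod
      (EuclideanSpace.volume_preserving_symm_measurableEquiv_toLp (Fin m)).symm
  exact (h3.comp ((volume_preserving_piFinSuccAbove (fun _ => ℝ) 0).comp
    (EuclideanSpace.volume_preserving_symm_measurableEquiv_toLp (Fin (m+1)))))

lemma sliceEquiv_norm (m : ℕ) (x : EuclideanSpace ℝ (Fin (m+1))) :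
    (sliceEquiv m x).1 ^ 2 + ‖(sliceEquiv m x).2‖ ^ 2 = ‖x‖ ^ 2 := by
  have h1 : ‖x‖ ^ 2 = ∑ i, x i ^ 2 := by
    rw [EuclideanSpace.norm_eq, Real.sq_sqrt (by positivity)]
    simp [Real.norm_eq_abs, sq_abs]
  have h2 : ‖(sliceEquiv m x).2‖ ^ 2 = ∑ j : Fin m, x ((0 : Fin (m+1)).succAbove j) ^ 2 := by
    rw [EuclideanSpace.norm_eq, Real.sq_sqrt (by positivity)]
    simp [Real.norm_eq_abs, sq_abs]
    rfl
  rw [h1, h2, Fin.sum_univ_succAbove (fun i => x i ^ 2) 0]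
  rfl

lemma ball_sq_vol (m : ℕ) (hm : 1 ≤ m) (c : ℝ) :
    volume {y : EuclideanSpace ℝ (Fin m) | ‖y‖ ^ 2 ≤ c}
      = ENNReal.ofReal (Real.sqrt c ^ m) * volume (ball (0 : EuclideanSpace ℝ (Fin m)) 1) := by
  rcases le_or_gt 0 c with hc | hc
  · have hset : {y : EuclideanSpace ℝ (Fin m) | ‖y‖ ^ 2 ≤ c} = closedBall 0 (Real.sqrt c) := by
      ext y
      simp only [mem_setOf_eq, mem_closedBall, dist_zero_right]
      rw [Real.le_sqrt (norm_nonneg y) hc]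
    rw [hset, Measure.addHaar_closedBall _ _ (Real.sqrt_nonneg c), finrank_euclideanSpace_fin]
  · have hset : {y : EuclideanSpace ℝ (Fin m) | ‖y‖ ^ 2 ≤ c} = ∅ := by
      ext y; simp only [mem_setOf_eq, mem_empty_iff_false, iff_false, not_le]
      exact lt_of_lt_of_le hc (by positivity)
    rw [hset, Real.sqrt_eq_zero_of_nonpos hc.le, zero_pow (by omega), measure_empty,
      ENNReal.ofReal_zero, zero_mul]

lemma slice_vol (m : ℕ) (hm : 1 ≤ m) (s : Set ℝ) (hs : MeasurableSet s) :
    volume {x : EuclideanSpace ℝ (Fin (m+1)) | x 0 ∈ s ∧ ‖x‖ ≤ 1}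
      = ∫⁻ t in s, ENNReal.ofReal (Real.sqrt (1 - t ^ 2) ^ m)
          * volume (ball (0 : EuclideanSpace ℝ (Fin m)) 1) := by
  set A : Set (ℝ × EuclideanSpace ℝ (Fin m)) :=
    {p | p.1 ∈ s ∧ p.1 ^ 2 + ‖p.2‖ ^ 2 ≤ 1} with hA
  have hAm : MeasurableSet A := by
    apply MeasurableSet.inter
    · exact measurable_fst hs
    · exact measurableSet_le ((measurable_fst.pow_const 2).add
          ((measurable_norm.comp measurable_snd).pow_const 2)) measurable_const
  have hpre : {x : EuclideanSpace ℝ (Fin (m+1)) | x 0 ∈ s ∧ ‖x‖ ≤ 1} = sliceEquiv m ⁻¹' A := by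
    ext x
    simp only [mem_setOf_eq, mem_preimage, hA]
    have h1 : (sliceEquiv m x).1 = x 0 := rfl
    have h2 := sliceEquiv_norm m x
    constructor
    · rintro ⟨hx1, hx2⟩
      refine ⟨by rwa [h1], ?_⟩
      rw [h2]
      calc ‖x‖ ^ 2 ≤ 1 ^ 2 := by
            apply pow_le_pow_left₀ (norm_nonneg x) hx2
        _ = 1 := one_pow 2
    · rintro ⟨hx1, hx2⟩
      refine ⟨by rwa [h1] at hx1, ?_⟩
      rw [h2] at hx2
      nlinarith [norm_nonneg x]
  rw [hpre, (sliceEquiv_mp m).measure_preimage hAm.nullMeasurableSet]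
  rw [show (volume : Measure (ℝ × EuclideanSpace ℝ (Fin m))) = volume.prod volume from rfl]
  rw [Measure.prod_apply hAm]
  have hslice : ∀ t : ℝ, volume (Prod.mk t ⁻¹' A)
      = s.indicator (fun t => ENNReal.ofReal (Real.sqrt (1 - t ^ 2) ^ m)
          * volume (ball (0 : EuclideanSpace ℝ (Fin m)) 1)) t := by
    intro t
    by_cases ht : t ∈ s
    · rw [indicator_of_mem ht]
      have : Prod.mk t ⁻¹' A = {y : EuclideanSpace ℝ (Fin m) | ‖y‖ ^ 2 ≤ 1 - t ^ 2} := by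
        ext y
        simp only [mem_preimage, mem_setOf_eq, hA, ht, true_and]
        constructor <;> intro h <;> linarith
      rw [this, ball_sq_vol m hm]
    · rw [indicator_of_notMem ht]
      have : Prod.mk t ⁻¹' A = ∅ := by
        ext y; simp [hA, ht]
      rw [this, measure_empty]
  simp_rw [hslice]
  rw [lintegral_indicator hs]

lemma gauss_tail {a ε : ℝ} (ha : 0 < a) (hε : 0 < ε) :
    ∫⁻ t in Set.Ioi ε, ENNReal.ofReal (Real.exp (-(a * t ^ 2)))
      ≤ ENNReal.ofReal (Real.exp (-(a * ε ^ 2)) / (2 * a * ε)) := by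
  have hderiv : ∀ x ∈ Set.Ici ε,
      HasDerivAt (fun t : ℝ => -(Real.exp (-(a * t ^ 2)) / (2 * a)))
        (x * Real.exp (-(a * x ^ 2))) x := by
    intro x _
    have h1 : HasDerivAt (fun t : ℝ => -(a * t ^ 2)) (-(a * (2 * x))) x := by
      exact (((hasDerivAt_pow 2 x).const_mul a).neg).congr_deriv (by norm_num)
    have h2 := ((h1.exp).div_const (2 * a)).neg
    refine h2.congr_deriv ?_
    field_simp
  have hpos : ∀ x ∈ Set.Ioi ε, 0 ≤ x * Real.exp (-(a * x ^ 2)) := by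
    intro x hx
    have : (0:ℝ) < x := lt_trans hε hx
    positivity
  have htends : Tendsto (fun t : ℝ => -(Real.exp (-(a * t ^ 2)) / (2 * a))) atTop (nhds 0) := by
    have h1 : Tendsto (fun t : ℝ => -(a * t ^ 2)) atTop atBot := by
      apply Filter.tendsto_neg_atBot_iff.mpr
      exact (tendsto_pow_atTop two_ne_zero).const_mul_atTop ha
    have h2 := Real.tendsto_exp_atBot.comp h1
    have := (h2.div_const (2 * a)).neg
    simpa using this
  have hval : ∫ x in Set.Ioi ε, x * Real.exp (-(a * x ^ 2))
      = Real.exp (-(a * ε ^ 2)) / (2 * a) := by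
    rw [integral_Ioi_of_hasDerivAt_of_nonneg' hderiv hpos htends]
    ring
  have hint : IntegrableOn (fun x => x * Real.exp (-(a * x ^ 2))) (Set.Ioi ε) :=
    integrableOn_Ioi_deriv_of_nonneg' hderiv hpos htends
  calc ∫⁻ t in Set.Ioi ε, ENNReal.ofReal (Real.exp (-(a * t ^ 2)))
      ≤ ∫⁻ t in Set.Ioi ε, ENNReal.ofReal (ε⁻¹ * (t * Real.exp (-(a * t ^ 2)))) := by
        apply setLIntegral_mono
        · apply Measurable.ennreal_ofReal
          fun_prop
        · intro t ht
          apply ENNReal.ofReal_le_ofReal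
          rw [← mul_assoc]
          nth_rewrite 1 [show Real.exp (-(a * t ^ 2))
            = 1 * Real.exp (-(a * t ^ 2)) from (one_mul _).symm]
          apply mul_le_mul_of_nonneg_right _ (Real.exp_nonneg _)
          rw [← div_eq_inv_mul]
          rw [le_div_iff₀ hε]
          linarith [le_of_lt (mem_Ioi.mp ht)]
    _ = ENNReal.ofReal (∫ t in Set.Ioi ε, ε⁻¹ * (t * Real.exp (-(a * t ^ 2)))) := by
        rw [← ofReal_integral_eq_lintegral_ofReal (hint.const_mul _)]
        filter_upwards [self_mem_ae_restrict measurableSet_Ioi] with t ht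
        have : (0:ℝ) < t := lt_trans hε ht
        positivity
    _ ≤ ENNReal.ofReal (Real.exp (-(a * ε ^ 2)) / (2 * a * ε)) := by
        apply ENNReal.ofReal_le_ofReal
        rw [integral_const_mul, hval]
        rw [div_mul_eq_div_div]
        rw [inv_mul_eq_div, div_div]
        apply le_of_eq
        ring_nf

lemma sqrt_pow_le_exp (m : ℕ) (t : ℝ) :
    Real.sqrt (1 - t ^ 2) ^ m ≤ Real.exp (-((m : ℝ) / 2 * t ^ 2)) := by
  have h1 : Real.sqrt (1 - t ^ 2) ≤ Real.exp (-(t ^ 2) / 2) := by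
    have h2 : (1 : ℝ) - t ^ 2 ≤ Real.exp (-(t ^ 2)) := by
      have := Real.add_one_le_exp (-(t ^ 2)); linarith
    have h3 : Real.exp (-(t ^ 2)) = Real.exp (-(t ^ 2) / 2) ^ 2 := by
      rw [← Real.exp_nat_mul]; congr 1; push_cast; ring
    calc Real.sqrt (1 - t ^ 2) ≤ Real.sqrt (Real.exp (-(t ^ 2))) := Real.sqrt_le_sqrt h2
      _ = Real.exp (-(t ^ 2) / 2) := by rw [h3, Real.sqrt_sq (Real.exp_nonneg _)]
  calc Real.sqrt (1 - t ^ 2) ^ m ≤ Real.exp (-(t ^ 2) / 2) ^ m :=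
        pow_le_pow_left₀ (Real.sqrt_nonneg _) h1 m
    _ = Real.exp (-((m : ℝ) / 2 * t ^ 2)) := by
        rw [← Real.exp_nat_mul]; ring_nf

lemma rm_ge (m : ℕ) (hm : 2 ≤ m) :
    Real.exp (-(1/3)) ≤ Real.sqrt (1 - 1 / (2 * m)) ^ m := by
  have hm' : (2:ℝ) ≤ (m:ℝ) := by exact_mod_cast hm
  set x : ℝ := 1 / (2 * m) with hxdef
  have hx0 : 0 < x := by positivity
  have hx1 : x ≤ 1/4 := by
    rw [hxdef]
    rw [div_le_div_iff₀ (by positivity) (by norm_num)]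
    linarith
  set u : ℝ := x / (1 - x) with hudef
  have h1x : (0:ℝ) < 1 - x := by linarith
  have hu0 : 0 ≤ u := by positivity
  have hkey : Real.exp (-u) ≤ 1 - x := by
    have h1 : u + 1 = 1 / (1 - x) := by
      rw [hudef]; field_simp; ring
    have h2 : 1 / (1 - x) ≤ Real.exp u := by
      rw [← h1]; linarith [Real.add_one_le_exp u]
    rw [Real.exp_neg]
    rw [inv_le_comm₀ (Real.exp_pos u) h1x]
    rw [← one_div]
    exact h2
  have h4 : Real.exp (-(u/2)) ≤ Real.sqrt (1 - x) := by
    rw [Real.le_sqrt (Real.exp_nonneg _) h1x.le]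
    have : Real.exp (-(u/2)) ^ 2 = Real.exp (-u) := by
      rw [← Real.exp_nat_mul]; congr 1; push_cast; ring
    rw [this]; exact hkey
  have h5 : Real.exp (-(u/2)) ^ m ≤ Real.sqrt (1 - x) ^ m :=
    pow_le_pow_left₀ (Real.exp_nonneg _) h4 m
  have h6 : Real.exp (-(u/2)) ^ m = Real.exp (-((m:ℝ) * u / 2)) := by
    rw [← Real.exp_nat_mul]; ring_nf
  have h7 : (m:ℝ) * u / 2 ≤ 1/3 := by
    have h2m1 : (0:ℝ) < 2 * (m:ℝ) - 1 := by linarith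
    have hu : u = 1 / (2 * (m:ℝ) - 1) := by
      rw [hudef, hxdef]
      have hm0 : (2 * (m:ℝ)) ≠ 0 := by positivity
      field_simp
    rw [hu, mul_one_div, div_div, div_le_div_iff₀ (by positivity) (by norm_num)]
    linarith
  calc Real.exp (-(1/3)) ≤ Real.exp (-((m:ℝ) * u / 2)) := Real.exp_le_exp.mpr (by linarith)
    _ = Real.exp (-(u/2)) ^ m := h6.symm
    _ ≤ Real.sqrt (1 - x) ^ m := h5

lemma denom_lower (m : ℕ) (δ : ℝ) (hδ0 : 0 < δ) (hδ1 : δ ≤ 1) :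
    ENNReal.ofReal (2 * δ)
      * (ENNReal.ofReal (Real.sqrt (1 - δ ^ 2) ^ m)
        * volume (ball (0 : EuclideanSpace ℝ (Fin m)) 1))
      ≤ volume (closedBall (0 : EuclideanSpace ℝ (Fin (m+1))) 1) := by
  set r : ℝ := Real.sqrt (1 - δ ^ 2) with hr
  have hδ2 : δ ^ 2 ≤ 1 := by nlinarith
  have hr2 : r ^ 2 = 1 - δ ^ 2 := Real.sq_sqrt (by linarith)
  set B : Set (ℝ × EuclideanSpace ℝ (Fin m)) := Icc (-δ) δ ×ˢ closedBall 0 r with hB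
  have hBm : MeasurableSet B := measurableSet_Icc.prod measurableSet_closedBall
  have hsub : sliceEquiv m ⁻¹' B ⊆ closedBall (0 : EuclideanSpace ℝ (Fin (m+1))) 1 := by
    intro x hx
    simp only [mem_preimage, hB, mem_prod, mem_Icc, mem_closedBall, dist_zero_right] at hx
    simp only [mem_closedBall, dist_zero_right]
    have h2 := sliceEquiv_norm m x
    have ha : (sliceEquiv m x).1 ^ 2 ≤ δ ^ 2 := sq_le_sq' hx.1.1 hx.1.2
    have hb : ‖(sliceEquiv m x).2‖ ^ 2 ≤ r ^ 2 :=
      pow_le_pow_left₀ (norm_nonneg _) hx.2 2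
    have : ‖x‖ ^ 2 ≤ 1 := by rw [← h2]; rw [hr2] at hb; linarith
    nlinarith [norm_nonneg x]
  calc ENNReal.ofReal (2 * δ) * (ENNReal.ofReal (r ^ m)
        * volume (ball (0 : EuclideanSpace ℝ (Fin m)) 1))
      = volume (sliceEquiv m ⁻¹' B) := by
        rw [(sliceEquiv_mp m).measure_preimage hBm.nullMeasurableSet]
        rw [show (volume : Measure (ℝ × EuclideanSpace ℝ (Fin m))) = volume.prod volume from rfl]
        rw [Measure.prod_prod, Real.volume_Icc,
          Measure.addHaar_closedBall _ _ (Real.sqrt_nonneg _), finrank_euclideanSpace_fin]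
        rw [show δ - -δ = 2 * δ by ring, ← hr]
    _ ≤ volume (closedBall (0 : EuclideanSpace ℝ (Fin (m+1))) 1) := measure_mono hsub

lemma exp_third_le_sqrt_two : Real.exp (1/3 : ℝ) ≤ Real.sqrt 2 := by
  have h6 : Real.exp (1/3 : ℝ) ^ 6 ≤ Real.sqrt 2 ^ 6 := by
    have e1 : Real.exp (1/3 : ℝ) ^ 6 = Real.exp 2 := by
      rw [← Real.exp_nat_mul]; norm_num
    have e2 : Real.sqrt 2 ^ 6 = 8 := by
      have : Real.sqrt 2 ^ 6 = (Real.sqrt 2 ^ 2) ^ 3 := by ring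
      rw [this, Real.sq_sqrt (by norm_num : (0:ℝ) ≤ 2)]
      norm_num
    rw [e1, e2]
    have h2 : Real.exp (2:ℝ) = Real.exp 1 ^ 2 := by
      rw [← Real.exp_nat_mul]; norm_num
    rw [h2]
    nlinarith [Real.exp_one_lt_d9, Real.exp_pos 1]
  exact le_of_pow_le_pow_left₀ (by norm_num) (Real.sqrt_nonneg 2) h6

lemma final_real (m : ℕ) (hm : 2 ≤ m) (ε : ℝ) (hε : 0 < ε) (E : ℝ) (hE : 0 < E) :
    (2 * (E / ((m:ℝ) * ε)))
        / (2 * Real.sqrt (1 / (2 * (m:ℝ)))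
          * (Real.sqrt (1 - Real.sqrt (1 / (2 * (m:ℝ))) ^ 2) ^ m))
      ≤ 2 / (ε * Real.sqrt (m:ℝ)) * E := by
  have hm' : (2:ℝ) ≤ (m:ℝ) := by exact_mod_cast hm
  have hmpos : (0:ℝ) < m := by linarith
  set δ : ℝ := Real.sqrt (1 / (2 * (m:ℝ))) with hδdef
  have hδpos : 0 < δ := Real.sqrt_pos.mpr (by positivity)
  have hδsq : δ ^ 2 = 1 / (2 * (m:ℝ)) := Real.sq_sqrt (by positivity)
  set R : ℝ := Real.sqrt (1 - δ ^ 2) ^ m with hRdef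
  have hRrw : R = Real.sqrt (1 - 1 / (2 * (m:ℝ))) ^ m := by rw [hRdef, hδsq]
  have hR : Real.sqrt 2 / 2 ≤ R := by
    rw [hRrw]
    refine le_trans ?_ (rm_ge m hm)
    have hs2 : (0:ℝ) < Real.sqrt 2 := by positivity
    have h22 : Real.sqrt 2 / 2 = (Real.sqrt 2)⁻¹ := by
      rw [inv_eq_one_div, div_eq_div_iff (by norm_num) hs2.ne', one_mul,
        Real.mul_self_sqrt (by norm_num)]
    rw [h22, Real.exp_neg]
    exact inv_anti₀ (Real.exp_pos _) exp_third_le_sqrt_two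
  have hRpos : 0 < R := lt_of_lt_of_le (by positivity) hR
  set s : ℝ := Real.sqrt (m:ℝ) with hsdef
  have hspos : 0 < s := Real.sqrt_pos.mpr hmpos
  have hs2m : s ^ 2 = (m:ℝ) := Real.sq_sqrt hmpos.le
  set t2 : ℝ := Real.sqrt 2 with ht2def
  have ht2pos : 0 < t2 := by rw [ht2def]; positivity
  have hstδ : s * t2 * δ = 1 := by
    rw [hsdef, ht2def, hδdef, ← Real.sqrt_mul hmpos.le, ← Real.sqrt_mul (by positivity)]
    rw [show (m:ℝ) * 2 * (1 / (2 * (m:ℝ))) = 1 by field_simp]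
    exact Real.sqrt_one
  have hL : (2 * (E / ((m:ℝ) * ε))) / (2 * δ * R) = E / (ε * ((m:ℝ) * δ * R)) := by
    field_simp
  have hRt : 2 / (ε * s) * E = (2 * E) / (ε * s) := by ring
  rw [hL, hRt, div_le_div_iff₀ (by positivity) (by positivity)]
  have hkey : E * ε * (s ^ 2 * δ * t2) = E * ε * s := by
    rw [show s ^ 2 * δ * t2 = s * (s * t2 * δ) by ring, hstδ, mul_one]
  rw [← hs2m]
  nlinarith [mul_nonneg (by positivity : (0:ℝ) ≤ 2 * E * ε * (s ^ 2 * δ))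
      (sub_nonneg.mpr hR), hkey]

theorem waist_concentration_complement (d : ℕ) (hd : 3 ≤ d) (ε : ℝ) (hε : 0 < ε) :
    volume {x : EuclideanSpace ℝ (Fin d) |
        x ∈ closedBall 0 1 ∧ ε < |x ⟨0, by omega⟩|} /
      volume (closedBall (0 : EuclideanSpace ℝ (Fin d)) 1)
      ≤ ENNReal.ofReal
          (2 / (ε * Real.sqrt (d - 1)) * Real.exp (-(ε ^ 2 * (d - 1) / 2))) := by
  obtain ⟨m, rfl⟩ : ∃ m, d = m + 1 := ⟨d - 1, by omega⟩
  have hm : 2 ≤ m := by omega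
  have hm' : (2:ℝ) ≤ (m:ℝ) := by exact_mod_cast hm
  have hmpos : (0:ℝ) < m := by linarith
  have hcast : ((m + 1 : ℕ) : ℝ) - 1 = (m : ℝ) := by push_cast; ring
  rw [hcast]
  set Vm := volume (ball (0 : EuclideanSpace ℝ (Fin m)) 1) with hVm
  have hVm0 : Vm ≠ 0 := (measure_ball_pos volume 0 one_pos).ne'
  have hVmt : Vm ≠ ⊤ := measure_ball_lt_top.ne
  set E : ℝ := Real.exp (-(ε ^ 2 * (m:ℝ) / 2)) with hE
  have hEpos : 0 < E := Real.exp_pos _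
  set Splus : Set (EuclideanSpace ℝ (Fin (m+1))) := {x | x 0 ∈ Ioi ε ∧ ‖x‖ ≤ 1} with hSp
  set Sminus : Set (EuclideanSpace ℝ (Fin (m+1))) := {x | x 0 ∈ Iio (-ε) ∧ ‖x‖ ≤ 1} with hSm
  have hx0m : Measurable fun x : EuclideanSpace ℝ (Fin (m+1)) => x 0 :=
    (measurable_pi_apply 0).comp ((MeasurableEquiv.toLp 2 (Fin (m+1) → ℝ)).symm).measurable
  have hSpm : MeasurableSet Splus :=
    (hx0m measurableSet_Ioi).inter (measurableSet_le measurable_norm measurable_const)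
  have hsub : {x : EuclideanSpace ℝ (Fin (m+1)) |
      x ∈ closedBall 0 1 ∧ ε < |x ⟨0, by omega⟩|} ⊆ Splus ∪ Sminus := by
    intro x hx
    obtain ⟨hx1, hx2⟩ := hx
    rw [mem_closedBall, dist_zero_right] at hx1
    have hx2' : ε < |x 0| := hx2
    rcases lt_abs.mp hx2' with h | h
    · left; exact ⟨h, hx1⟩
    · right; exact ⟨by simpa [mem_Iio] using (by linarith : x 0 < -ε), hx1⟩
  have hneg : Sminus = (fun x : EuclideanSpace ℝ (Fin (m+1)) => -x) ⁻¹' Splus := by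
    ext x
    simp only [hSm, hSp, mem_setOf_eq, mem_preimage, mem_Ioi, mem_Iio]
    have h0 : (-x) 0 = -(x 0) := rfl
    rw [h0, norm_neg]
    constructor
    · rintro ⟨h1, h2⟩; exact ⟨by linarith, h2⟩
    · rintro ⟨h1, h2⟩; exact ⟨by linarith, h2⟩
  have hvolneg : volume Sminus = volume Splus := by
    rw [hneg]
    exact (LinearIsometryEquiv.neg ℝ
      (E := EuclideanSpace ℝ (Fin (m+1)))).measurePreserving.measure_preimage
      hSpm.nullMeasurableSet
  have hplus : volume Splus ≤ ENNReal.ofReal (E / ((m:ℝ) * ε)) * Vm := by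
    rw [hSp, slice_vol m (by omega) (Ioi ε) measurableSet_Ioi, ← hVm]
    calc ∫⁻ t in Ioi ε, ENNReal.ofReal (Real.sqrt (1 - t ^ 2) ^ m) * Vm
        ≤ ∫⁻ t in Ioi ε, ENNReal.ofReal (Real.exp (-((m:ℝ) / 2 * t ^ 2))) * Vm :=
          lintegral_mono fun t =>
            mul_le_mul_left (ENNReal.ofReal_le_ofReal (sqrt_pow_le_exp m t)) Vm
      _ = (∫⁻ t in Ioi ε, ENNReal.ofReal (Real.exp (-((m:ℝ) / 2 * t ^ 2)))) * Vm :=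
          lintegral_mul_const Vm (Measurable.ennreal_ofReal (by fun_prop))
      _ ≤ ENNReal.ofReal (Real.exp (-((m:ℝ) / 2 * ε ^ 2)) / (2 * ((m:ℝ) / 2) * ε)) * Vm :=
          mul_le_mul_left (gauss_tail (by positivity) hε) Vm
      _ = ENNReal.ofReal (E / ((m:ℝ) * ε)) * Vm := by
          rw [show -((m:ℝ) / 2 * ε ^ 2) = -(ε ^ 2 * (m:ℝ) / 2) by ring,
            show 2 * ((m:ℝ) / 2) * ε = (m:ℝ) * ε by ring, ← hE]
  have hN : volume {x : EuclideanSpace ℝ (Fin (m+1)) |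
      x ∈ closedBall 0 1 ∧ ε < |x ⟨0, by omega⟩|}
      ≤ ENNReal.ofReal (2 * (E / ((m:ℝ) * ε))) * Vm := by
    calc volume {x : EuclideanSpace ℝ (Fin (m+1)) |
        x ∈ closedBall 0 1 ∧ ε < |x ⟨0, by omega⟩|}
        ≤ volume (Splus ∪ Sminus) := measure_mono hsub
      _ ≤ volume Splus + volume Sminus := measure_union_le _ _
      _ = 2 * volume Splus := by rw [hvolneg, two_mul]
      _ ≤ 2 * (ENNReal.ofReal (E / ((m:ℝ) * ε)) * Vm) := by
          exact mul_le_mul_right hplus 2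
      _ = ENNReal.ofReal (2 * (E / ((m:ℝ) * ε))) * Vm := by
          rw [ENNReal.ofReal_mul (by norm_num), ← mul_assoc]
          norm_num
  set δ : ℝ := Real.sqrt (1 / (2 * (m:ℝ))) with hδdef
  have hδpos : 0 < δ := Real.sqrt_pos.mpr (by positivity)
  have hδle : δ ≤ 1 := by
    rw [hδdef]
    have h1 : 1 / (2 * (m:ℝ)) ≤ 1 := by
      rw [div_le_one (by positivity)]; linarith
    calc Real.sqrt (1 / (2 * (m:ℝ))) ≤ Real.sqrt 1 := Real.sqrt_le_sqrt h1
      _ = 1 := Real.sqrt_one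
  have hδsq : δ ^ 2 = 1 / (2 * (m:ℝ)) := Real.sq_sqrt (by positivity)
  set K2 : ℝ := 2 * δ * (Real.sqrt (1 - δ ^ 2) ^ m) with hK2
  have h1δ : 0 < 1 - δ ^ 2 := by rw [hδsq]; rw [sub_pos, div_lt_one (by positivity)]; linarith
  have hK2pos : 0 < K2 := by
    rw [hK2]
    have := Real.sqrt_pos.mpr h1δ
    positivity
  have hD : ENNReal.ofReal K2 * Vm
      ≤ volume (closedBall (0 : EuclideanSpace ℝ (Fin (m+1))) 1) := by
    refine le_trans (le_of_eq ?_) (denom_lower m δ hδpos hδle)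
    rw [hK2, ENNReal.ofReal_mul (by positivity), mul_assoc, ← hVm]
  calc volume {x : EuclideanSpace ℝ (Fin (m+1)) |
        x ∈ closedBall 0 1 ∧ ε < |x ⟨0, by omega⟩|} /
      volume (closedBall (0 : EuclideanSpace ℝ (Fin (m+1))) 1)
      ≤ (ENNReal.ofReal (2 * (E / ((m:ℝ) * ε))) * Vm) / (ENNReal.ofReal K2 * Vm) :=
        ENNReal.div_le_div hN hD
    _ = ENNReal.ofReal (2 * (E / ((m:ℝ) * ε))) / ENNReal.ofReal K2 :=
        ENNReal.mul_div_mul_right _ _ hVm0 hVmt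
    _ = ENNReal.ofReal (2 * (E / ((m:ℝ) * ε)) / K2) :=
        (ENNReal.ofReal_div_of_pos hK2pos).symm
    _ ≤ ENNReal.ofReal (2 / (ε * Real.sqrt (m:ℝ)) * E) := by
        apply ENNReal.ofReal_le_ofReal
        rw [hK2, hδdef]
        exact final_real m hm ε hε E hEpos
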